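/- The operators T_1, ..., T_{r-1} defined on the vector space V^{⊗r}, where V has basis v_1, ..., v_n, by v_a T_i = q v_a if a_i = a_{i+1}, v_a T_i = v_{a·s_i} if a_i > a_{i+1}, and v_a T_i = v_{a·s_i} + (q - q^{-1}) v_a if a_i < a_{i+1}, satisfy the quadratic relation (T_i - q)(T_i + q^{-1}) = 0 for each i. -/

import Mathlib

/-- Matrix coefficient of the operator `T` (acting at positions `i`, `j = i+1`) of the
basis vector `v_b` in `v_a T`:  `v_a T = q v_a` if `a_i = a_{i+1}`;
`v_a T = v_{a·s_i}` if `a_i > a_{i+1}`; `v_a T = v_{a·s_i} + (q - q⁻¹) v_a` if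
`a_i < a_{i+1}`. -/
noncomputable def Tcoef {k : Type*} [Field k] (q : k) {n r : ℕ} (i j : Fin r)
    (a b : Fin r → Fin n) : k :=
  if a i = a j then (if b = a then q else 0)
  else if a j < a i then (if b = a ∘ (Equiv.swap i j) then 1 else 0)
  else (if b = a ∘ (Equiv.swap i j) then 1 else 0) + (if b = a then q - q⁻¹ else 0)

/-- The operator `T_i` on `V^{⊗ r}`, realized in coordinates with respect to the basis
`{v_a : a ∈ {1,…,n}^r}` of simple tensors. -/
noncomputable def heckeT {k : Type*} [Field k] (q : k) {n r : ℕ} (i j : Fin r)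
    (f : (Fin r → Fin n) → k) : (Fin r → Fin n) → k :=
  fun b => ∑ a : Fin r → Fin n, f a * Tcoef q i j a b

/-- Each operator `T_i` satisfies the quadratic relation `(T_i - q)(T_i + q⁻¹) = 0`,
i.e. `T_i² = (q - q⁻¹) T_i + 1`. -/
lemma Tcoef_key {k : Type*} [Field k] (q : k) (hq : q ≠ 0) {n r : ℕ} (i j : Fin r)
    (hij : i ≠ j) (a b : Fin r → Fin n) :
    ∑ c : Fin r → Fin n, Tcoef q i j a c * Tcoef q i j c b
      = (q - q⁻¹) * Tcoef q i j a b + (if b = a then 1 else 0) := by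
  set s : Fin r → Fin n := a ∘ Equiv.swap i j with hs
  have hsi : s i = a j := by simp [hs]
  have hsj : s j = a i := by simp [hs]
  have hss : s ∘ Equiv.swap i j = a := by
    funext x; simp [hs, Function.comp]
  rcases lt_trichotomy (a i) (a j) with h | h | h
  · -- a i < a j : third branch
    have hne : a i ≠ a j := ne_of_lt h
    have hTa : ∀ c, Tcoef q i j a c
        = (if c = s then 1 else 0) + (if c = a then q - q⁻¹ else 0) := by
      intro c; simp [Tcoef, hne, not_lt.2 h.le, hs]
    have hTs : Tcoef q i j s b = (if b = a then 1 else 0) := by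
      have : s j < s i := by rw [hsi, hsj]; exact h
      simp [Tcoef, ne_of_gt this, this, hss]
    simp only [hTa, add_mul, ite_mul, one_mul, zero_mul, Finset.sum_add_distrib,
      Finset.sum_ite_eq', Finset.mem_univ, if_pos]
    rw [hTs]
    ring
  · -- a i = a j
    have hsa : s = a := by
      funext x
      rcases eq_or_ne x i with rfl | hxi
      · simpa [hs] using h.symm
      rcases eq_or_ne x j with rfl | hxj
      · simpa [hs] using h
      · simp [hs, Equiv.swap_apply_of_ne_of_ne hxi hxj]
    have hTa : ∀ c, Tcoef q i j a c = (if c = a then q else 0) := by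
      intro c; simp [Tcoef, h]
    simp only [hTa, ite_mul, zero_mul, Finset.sum_ite_eq', Finset.mem_univ, if_pos]
    split_ifs with hb
    · field_simp
      ring
    · ring
  · -- a j < a i : second branch
    have hne : a i ≠ a j := ne_of_gt h
    have hTa : ∀ c, Tcoef q i j a c = (if c = s then 1 else 0) := by
      intro c; simp [Tcoef, hne, h, hs]
    have hTs : Tcoef q i j s b
        = (if b = a then 1 else 0) + (if b = s then q - q⁻¹ else 0) := by
      have h1 : s i < s j := by rw [hsi, hsj]; exact h
      simp [Tcoef, ne_of_lt h1, not_lt.2 h1.le, hss]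
    simp only [hTa, ite_mul, one_mul, zero_mul, Finset.sum_ite_eq', Finset.mem_univ,
      if_pos, hTs]
    split_ifs <;> ring

theorem Top_quadratic {k : Type*} [Field k] (q : k) (hq : q ≠ 0) {n r : ℕ}
    (i j : Fin r) (hij : (i : ℕ) + 1 = (j : ℕ)) (f : (Fin r → Fin n) → k) :
    heckeT q i j (heckeT q i j f) = fun b => (q - q⁻¹) * heckeT q i j f b + f b := by
  have hij' : i ≠ j := by intro h; rw [h] at hij; omega
  funext b
  unfold heckeT
  calc ∑ c : Fin r → Fin n, (∑ a : Fin r → Fin n, f a * Tcoef q i j a c) * Tcoef q i j c b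
      = ∑ c : Fin r → Fin n, ∑ a : Fin r → Fin n, f a * (Tcoef q i j a c * Tcoef q i j c b) := by
        simp [Finset.sum_mul, mul_assoc]
    _ = ∑ a : Fin r → Fin n, ∑ c : Fin r → Fin n, f a * (Tcoef q i j a c * Tcoef q i j c b) :=
        Finset.sum_comm
    _ = ∑ a : Fin r → Fin n, f a * ((q - q⁻¹) * Tcoef q i j a b + (if b = a then 1 else 0)) := by
        simp [← Finset.mul_sum, Tcoef_key q hq i j hij']
    _ = (q - q⁻¹) * ∑ a : Fin r → Fin n, f a * Tcoef q i j a b + f b := by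
        simp only [mul_add, Finset.sum_add_distrib, mul_ite, mul_one, mul_zero,
          Finset.sum_ite_eq', Finset.mem_univ, if_pos, Finset.mul_sum]
        congr 1
        · exact Finset.sum_congr rfl fun _ _ => by ring
        · simp
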